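/- arXiv:math-ph/0211015 — 2 statements merged into one kernel-verified Lean document; each statement's English description precedes it below -/
import Mathlib

section
/- Fix an integer ν ≥ 1, a bounded potential V : ℤ^ν → ℝ, and let H = H₀ + V. Then for every f, g ∈ ℓ²(ℤ^ν), Δ(f + g, U(f − g); V) ≥ 2⟨f, (H₀ − 2ν)f⟩ − 8ν‖g‖² + 4 Re⟨f, V g⟩. -/
noncomputable section

open scoped ComplexConjugate

namespace DHKS

/-- The Hilbert space ℓ²(α; ℂ). -/
abbrev L2 (α : Type*) := lp (fun _ : α => ℂ) 2

variable {α β : Type*}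

lemma memℓp_two_iff (f : α → ℂ) :
    Memℓp f 2 ↔ Summable (fun n => ‖f n‖ ^ (2 : ℝ)) := by
  rw [memℓp_gen_iff (by norm_num)]
  norm_num

lemma sum_sq_le (u : L2 α) (s : Finset α) :
    ∑ n ∈ s, ‖(u : α → ℂ) n‖ ^ (2:ℝ) ≤ ‖u‖ ^ (2:ℝ) := by
  simpa using lp.sum_rpow_le_norm_rpow (p := 2) (by norm_num) u s

lemma norm_le_of_sum_sq (u : L2 α) {C : ℝ} (hC : 0 ≤ C)
    (h : ∀ s : Finset α, ∑ n ∈ s, ‖(u : α → ℂ) n‖ ^ (2:ℝ) ≤ C ^ (2:ℝ)) : ‖u‖ ≤ C := by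
  refine lp.norm_le_of_forall_sum_le (p := 2) (by norm_num) hC ?_
  simpa using h

/-- Composition with an injective map, as a continuous linear map on ℓ². -/
def compOp (σ : α → β) (hσ : Function.Injective σ) : L2 β →L[ℂ] L2 α :=
  LinearMap.mkContinuous
    { toFun := fun u => ⟨fun n => (u : β → ℂ) (σ n), by
        apply (memℓp_two_iff _).2
        exact ((memℓp_two_iff _).1 (lp.memℓp u)).comp_injective hσ⟩
      map_add' := by
        intro u v; apply lp.ext; funext n
        simp only [lp.coeFn_add, Pi.add_apply]
      map_smul' := by
        intro c u; apply lp.ext; funext n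
        simp only [lp.coeFn_smul, Pi.smul_apply, RingHom.id_apply] }
    1 (by
      intro u
      rw [one_mul]
      refine norm_le_of_sum_sq _ (norm_nonneg u) (fun s => ?_)
      classical
      calc ∑ n ∈ s, ‖(u : β → ℂ) (σ n)‖ ^ (2:ℝ)
          = ∑ m ∈ s.image σ, ‖(u : β → ℂ) m‖ ^ (2:ℝ) := by
            rw [Finset.sum_image (fun a _ b _ h => hσ h)]
        _ ≤ ‖u‖ ^ (2:ℝ) := sum_sq_le u _)

@[simp] lemma compOp_apply (σ : α → β) (hσ : Function.Injective σ) (u : L2 β) (n : α) :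
    (compOp σ hσ u : α → ℂ) n = (u : β → ℂ) (σ n) := rfl

/-- Multiplication by a bounded real-valued function, as a continuous linear map on ℓ². -/
def mulOp (V : α → ℝ) (C : ℝ) (hC : ∀ n, |V n| ≤ C) : L2 α →L[ℂ] L2 α :=
  LinearMap.mkContinuous
    { toFun := fun u => ⟨fun n => (V n : ℂ) * (u : α → ℂ) n, by
        apply (memℓp_two_iff _).2
        have h := (((memℓp_two_iff _).1 (lp.memℓp u)).mul_left ((max C 0) ^ (2:ℝ)))
        apply Summable.of_nonneg_of_le (fun n => by positivity) (fun n => ?_) h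
        have h1 : ‖(V n : ℂ) * (u : α → ℂ) n‖ = |V n| * ‖(u : α → ℂ) n‖ := by
          rw [norm_mul, Complex.norm_real, Real.norm_eq_abs]
        rw [h1, Real.mul_rpow (abs_nonneg _) (norm_nonneg _)]
        have h3 : |V n| ^ (2:ℝ) ≤ (max C 0) ^ (2:ℝ) :=
          Real.rpow_le_rpow (abs_nonneg _) (le_max_of_le_left (hC n)) (by norm_num)
        exact mul_le_mul_of_nonneg_right h3 (by positivity)⟩
      map_add' := by
        intro u v; apply lp.ext; funext n
        simp only [lp.coeFn_add, Pi.add_apply]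
        ring
      map_smul' := by
        intro c u; apply lp.ext; funext n
        simp only [lp.coeFn_smul, Pi.smul_apply, RingHom.id_apply, smul_eq_mul]
        ring }
    (max C 0) (by
      intro u
      refine norm_le_of_sum_sq _ (by positivity) (fun s => ?_)
      have key : ∀ n ∈ s, ‖(V n : ℂ) * (u : α → ℂ) n‖ ^ (2:ℝ)
          ≤ (max C 0) ^ (2:ℝ) * ‖(u : α → ℂ) n‖ ^ (2:ℝ) := by
        intro n _
        have h1 : ‖(V n : ℂ) * (u : α → ℂ) n‖ = |V n| * ‖(u : α → ℂ) n‖ := by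
          rw [norm_mul, Complex.norm_real, Real.norm_eq_abs]
        rw [h1, Real.mul_rpow (abs_nonneg _) (norm_nonneg _)]
        have h3 : |V n| ^ (2:ℝ) ≤ (max C 0) ^ (2:ℝ) :=
          Real.rpow_le_rpow (abs_nonneg _) (le_max_of_le_left (hC n)) (by norm_num)
        exact mul_le_mul_of_nonneg_right h3 (by positivity)
      calc ∑ n ∈ s, ‖(V n : ℂ) * (u : α → ℂ) n‖ ^ (2:ℝ)
          ≤ ∑ n ∈ s, (max C 0) ^ (2:ℝ) * ‖(u : α → ℂ) n‖ ^ (2:ℝ) := Finset.sum_le_sum key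
        _ = (max C 0) ^ (2:ℝ) * ∑ n ∈ s, ‖(u : α → ℂ) n‖ ^ (2:ℝ) := by rw [Finset.mul_sum]
        _ ≤ (max C 0) ^ (2:ℝ) * ‖u‖ ^ (2:ℝ) :=
            mul_le_mul_of_nonneg_left (sum_sq_le u _) (by positivity)
        _ = (max C 0 * ‖u‖) ^ (2:ℝ) :=
            (Real.mul_rpow (le_max_right _ _) (norm_nonneg _)).symm)

@[simp] lemma mulOp_apply (V : α → ℝ) (C : ℝ) (hC : ∀ n, |V n| ≤ C) (u : L2 α) (n : α) :
    (mulOp V C hC u : α → ℂ) n = (V n : ℂ) * (u : α → ℂ) n := rfl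

/-- Extension by zero along an injective map, as a continuous linear map on ℓ². -/
def extOp (σ : α → β) (hσ : Function.Injective σ) : L2 α →L[ℂ] L2 β :=
  LinearMap.mkContinuous
    { toFun := fun u => ⟨Function.extend σ (u : α → ℂ) 0, by
        apply (memℓp_two_iff _).2
        have hpt : (fun b => ‖Function.extend σ (u : α → ℂ) 0 b‖ ^ (2:ℝ))
            = Function.extend σ (fun a => ‖(u : α → ℂ) a‖ ^ (2:ℝ)) 0 := by
          funext b
          rcases em (∃ a, σ a = b) with ⟨a, rfl⟩ | hb
          · rw [hσ.extend_apply, hσ.extend_apply]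
          · rw [Function.extend_apply' _ _ _ hb, Function.extend_apply' _ _ _ hb]
            simp [Real.zero_rpow (by norm_num : (2:ℝ) ≠ 0)]
        rw [hpt, summable_extend_zero hσ]
        exact (memℓp_two_iff _).1 (lp.memℓp u)⟩
      map_add' := by
        intro u v; apply lp.ext; funext b
        simp only [lp.coeFn_add, Pi.add_apply]
        rcases em (∃ a, σ a = b) with ⟨a, rfl⟩ | hb
        · rw [hσ.extend_apply, hσ.extend_apply, hσ.extend_apply]
          simp [lp.coeFn_add]
        · rw [Function.extend_apply' _ _ _ hb, Function.extend_apply' _ _ _ hb,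
            Function.extend_apply' _ _ _ hb]
          simp
      map_smul' := by
        intro c u; apply lp.ext; funext b
        simp only [lp.coeFn_smul, Pi.smul_apply, RingHom.id_apply, smul_eq_mul]
        rcases em (∃ a, σ a = b) with ⟨a, rfl⟩ | hb
        · rw [hσ.extend_apply, hσ.extend_apply]
          simp [lp.coeFn_smul]
        · rw [Function.extend_apply' _ _ _ hb, Function.extend_apply' _ _ _ hb]
          simp }
    1 (by
      intro u
      rw [one_mul]
      refine norm_le_of_sum_sq _ (norm_nonneg u) (fun s => ?_)
      have hpt : (fun b => ‖Function.extend σ (u : α → ℂ) 0 b‖ ^ (2:ℝ))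
          = Function.extend σ (fun a => ‖(u : α → ℂ) a‖ ^ (2:ℝ)) 0 := by
        funext b
        rcases em (∃ a, σ a = b) with ⟨a, rfl⟩ | hb
        · rw [hσ.extend_apply, hσ.extend_apply]
        · rw [Function.extend_apply' _ _ _ hb, Function.extend_apply' _ _ _ hb]
          simp [Real.zero_rpow (by norm_num : (2:ℝ) ≠ 0)]
      have hsumm : Summable (fun a => ‖(u : α → ℂ) a‖ ^ (2:ℝ)) :=
        (memℓp_two_iff _).1 (lp.memℓp u)
      calc ∑ b ∈ s, ‖Function.extend σ (u : α → ℂ) 0 b‖ ^ (2:ℝ)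
          ≤ ∑' b, ‖Function.extend σ (u : α → ℂ) 0 b‖ ^ (2:ℝ) := by
            refine Summable.sum_le_tsum s (fun b _ => by positivity) ?_
            rw [hpt, summable_extend_zero hσ]; exact hsumm
        _ = ∑' a, ‖(u : α → ℂ) a‖ ^ (2:ℝ) := by
            rw [hpt, tsum_extend_zero hσ]
        _ = ‖u‖ ^ (2:ℝ) := by
            simpa using (lp.norm_rpow_eq_tsum (p := 2) (by norm_num) u).symm)

lemma extOp_apply (σ : α → β) (hσ : Function.Injective σ) (u : L2 α) (b : β) :
    (extOp σ hσ u : β → ℂ) b = Function.extend σ (u : α → ℂ) 0 b := rfl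

/-- The real quadratic form ⟨φ, A φ⟩ of an operator. -/
def quadForm (A : L2 α →L[ℂ] L2 α) (φ : L2 α) : ℝ :=
  (inner ℂ φ (A φ) : ℂ).re

/-- `E` is an eigenvalue of the bounded operator `A`. -/
def IsEigenvalue (A : L2 α →L[ℂ] L2 α) (E : ℝ) : Prop :=
  ∃ u : L2 α, u ≠ 0 ∧ A u = (E : ℂ) • u

lemma abs_mul_sq_le {γ x Cb : ℝ} (h : |x| ≤ Cb) : |γ * x ^ 2| ≤ |γ| * Cb ^ 2 := by
  have h1 := abs_le.1 h
  rw [abs_mul, abs_of_nonneg (sq_nonneg x)]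
  exact mul_le_mul_of_nonneg_left (sq_le_sq' (by linarith [h1.1]) h1.2) (abs_nonneg γ)

end DHKS

namespace DHKS

/-! ## The lattice ℤ^ν -/

/-- The lattice `ℤ^ν`. -/
abbrev Zlat (ν : ℕ) := Fin ν → ℤ

/-- The ℓ¹-norm `|n|₁ = |n₁| + ⋯ + |n_ν|` of a lattice point. -/
def normOne {ν : ℕ} (n : Zlat ν) : ℕ := ∑ i, (n i).natAbs

/-- The `i`-th standard unit vector in `ℤ^ν`. -/
def unitVec (ν : ℕ) (i : Fin ν) : Zlat ν := fun k => if k = i then 1 else 0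

/-- The free discrete Schrödinger operator `(H₀ u)(n) = ∑_{|j|₁ = 1} u(n+j)`
on `ℓ²(ℤ^ν)`, written as the sum over translations by `± eᵢ`. -/
def H0 (ν : ℕ) : L2 (Zlat ν) →L[ℂ] L2 (Zlat ν) :=
  ∑ i : Fin ν,
    (compOp (fun n => n + unitVec ν i) (add_left_injective _) +
      compOp (fun n => n + (-unitVec ν i)) (add_left_injective _))

lemma H0_apply {ν : ℕ} (u : L2 (Zlat ν)) (n : Zlat ν) :
    (H0 ν u : Zlat ν → ℂ) n =
      ∑ i : Fin ν, ((u : Zlat ν → ℂ) (n + unitVec ν i) + (u : Zlat ν → ℂ) (n - unitVec ν i)) := by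
  simp [H0, ContinuousLinearMap.sum_apply, lp.coeFn_sum, Finset.sum_apply,
    ContinuousLinearMap.add_apply, lp.coeFn_add, Pi.add_apply, sub_eq_add_neg]
  erw [Finset.sum_apply]
  simp

/-- The unitary `(U φ)(n) = (-1)^{|n|₁} φ(n)`. -/
def Uop (ν : ℕ) : L2 (Zlat ν) →L[ℂ] L2 (Zlat ν) :=
  mulOp (fun n => (-1 : ℝ) ^ normOne n) 1 (fun n => by simp [abs_pow])

/-- The discrete Schrödinger operator `H = H₀ + V` on `ℓ²(ℤ^ν)`. -/
def schrodinger (ν : ℕ) (V : Zlat ν → ℝ) (C : ℝ) (hC : ∀ n, |V n| ≤ C) :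
    L2 (Zlat ν) →L[ℂ] L2 (Zlat ν) :=
  H0 ν + mulOp V C hC

/-- The quantity `Δ(φ₊, φ₋; V) = ⟨φ₊, (H-2ν)φ₊⟩ + ⟨φ₋, (-H-2ν)φ₋⟩`. -/
def Delta (ν : ℕ) (V : Zlat ν → ℝ) (C : ℝ) (hC : ∀ n, |V n| ≤ C)
    (φp φm : L2 (Zlat ν)) : ℝ :=
  quadForm (schrodinger ν V C hC - ((2 * (ν:ℝ) : ℝ) : ℂ) • 1) φp +
    quadForm (-schrodinger ν V C hC - ((2 * (ν:ℝ) : ℝ) : ℂ) • 1) φm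

end DHKS

namespace DHKS

/-! ### Auxiliary lemmas for statement0 -/

lemma inner_L2 {α : Type*} (u v : L2 α) :
    (inner ℂ u v : ℂ) = ∑' n, conj ((u : α → ℂ) n) * (v : α → ℂ) n := by
  rw [lp.inner_eq_tsum]; simp only [RCLike.inner_apply']

lemma Uop_apply {ν : ℕ} (u : L2 (Zlat ν)) (n : Zlat ν) :
    (Uop ν u : Zlat ν → ℂ) n = (-1 : ℂ) ^ normOne n * (u : Zlat ν → ℂ) n := by
  rw [Uop, mulOp_apply]; push_cast; ring

lemma neg_one_pow_odd_sum {a b : ℕ} (h : (a + b) % 2 = 1) :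
    ((-1 : ℂ)) ^ a = -(-1 : ℂ) ^ b := by
  rcases Nat.even_or_odd a with ha | ha <;> rcases Nat.even_or_odd b with hb | hb
  · exact absurd h (by rw [Nat.even_iff] at ha hb; omega)
  · simp [ha.neg_one_pow, hb.neg_one_pow]
  · simp [ha.neg_one_pow, hb.neg_one_pow]
  · exact absurd h (by rw [Nat.odd_iff] at ha hb; omega)

lemma normOne_parity_aux {ν : ℕ} (n m : Zlat ν) (i : Fin ν)
    (hi : (m i).natAbs % 2 ≠ (n i).natAbs % 2)
    (hk : ∀ k, k ≠ i → m k = n k) :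
    (normOne m + normOne n) % 2 = 1 := by
  classical
  rw [normOne, normOne, ← Finset.sum_add_distrib,
    ← Finset.add_sum_erase _ _ (Finset.mem_univ i)]
  have heven : Even (∑ k ∈ Finset.univ.erase i, ((m k).natAbs + (n k).natAbs)) := by
    have : ∑ k ∈ Finset.univ.erase i, ((m k).natAbs + (n k).natAbs)
        = 2 * ∑ k ∈ Finset.univ.erase i, (n k).natAbs := by
      rw [Finset.mul_sum]
      refine Finset.sum_congr rfl (fun k hk' => ?_)
      rw [hk k (Finset.mem_erase.1 hk').1]; ring
    exact this ▸ ⟨_, (two_mul _)⟩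
  rcases heven with ⟨t, ht⟩
  omega

lemma normOne_add_parity {ν : ℕ} (n : Zlat ν) (i : Fin ν) :
    (normOne (n + unitVec ν i) + normOne n) % 2 = 1 := by
  refine normOne_parity_aux n _ i ?_ ?_
  · have : (n + unitVec ν i) i = n i + 1 := by simp [unitVec]
    rw [this]; omega
  · intro k hk
    simp [unitVec, hk]

lemma normOne_sub_parity {ν : ℕ} (n : Zlat ν) (i : Fin ν) :
    (normOne (n - unitVec ν i) + normOne n) % 2 = 1 := by
  refine normOne_parity_aux n _ i ?_ ?_
  · have : (n - unitVec ν i) i = n i - 1 := by simp [unitVec]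
    rw [this]; omega
  · intro k hk
    simp [unitVec, hk]

lemma H0_Uop {ν : ℕ} (u : L2 (Zlat ν)) :
    H0 ν (Uop ν u) = -(Uop ν (H0 ν u)) := by
  apply lp.ext; funext n
  rw [lp.coeFn_neg]
  simp only [Pi.neg_apply]
  rw [H0_apply, Uop_apply, H0_apply, Finset.mul_sum, ← Finset.sum_neg_distrib]
  refine Finset.sum_congr rfl (fun i _ => ?_)
  rw [Uop_apply, Uop_apply,
    neg_one_pow_odd_sum (normOne_add_parity n i),
    neg_one_pow_odd_sum (normOne_sub_parity n i)]
  ring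

lemma mulOp_Uop {ν : ℕ} (V : Zlat ν → ℝ) (C : ℝ) (hC : ∀ n, |V n| ≤ C) (u : L2 (Zlat ν)) :
    mulOp V C hC (Uop ν u) = Uop ν (mulOp V C hC u) := by
  apply lp.ext; funext n
  rw [mulOp_apply, Uop_apply, Uop_apply, mulOp_apply]; ring

lemma inner_Uop_Uop {ν : ℕ} (u v : L2 (Zlat ν)) :
    (inner ℂ (Uop ν u) (Uop ν v) : ℂ) = inner ℂ u v := by
  rw [inner_L2, inner_L2]
  refine tsum_congr (fun n => ?_)
  rw [Uop_apply, Uop_apply, map_mul]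
  have h1 : conj ((-1 : ℂ) ^ normOne n) = (-1 : ℂ) ^ normOne n := by
    rw [map_pow, map_neg, map_one]
  have h2 : ((-1 : ℂ) ^ normOne n) * ((-1 : ℂ) ^ normOne n) = 1 := by
    rw [← pow_add]; exact Even.neg_one_pow ⟨normOne n, rfl⟩
  rw [h1]
  linear_combination conj ((u : Zlat ν → ℂ) n) * (v : Zlat ν → ℂ) n * h2

lemma inner_mulOp_symm {ν : ℕ} (V : Zlat ν → ℝ) (C : ℝ) (hC : ∀ n, |V n| ≤ C)
    (u v : L2 (Zlat ν)) :
    (inner ℂ (mulOp V C hC u) v : ℂ) = inner ℂ u (mulOp V C hC v) := by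
  rw [inner_L2, inner_L2]
  refine tsum_congr (fun n => ?_)
  rw [mulOp_apply, mulOp_apply, map_mul, Complex.conj_ofReal]
  ring

lemma norm_H0_le (ν : ℕ) : ‖H0 ν‖ ≤ 2 * ν := by
  rw [H0]
  calc ‖∑ i : Fin ν, (compOp (fun n => n + unitVec ν i) (add_left_injective _) +
        compOp (fun n => n + (-unitVec ν i)) (add_left_injective _))‖
      ≤ ∑ i : Fin ν, ‖(compOp (fun n => n + unitVec ν i) (add_left_injective _) +
        compOp (fun n => n + (-unitVec ν i)) (add_left_injective _))‖ := norm_sum_le _ _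
    _ ≤ ∑ _i : Fin ν, (2 : ℝ) := by
        refine Finset.sum_le_sum (fun i _ => ?_)
        calc ‖_‖ ≤ ‖compOp (fun n => n + unitVec ν i) (add_left_injective _)‖ +
              ‖compOp (fun n => n + (-unitVec ν i)) (add_left_injective _)‖ := norm_add_le _ _
          _ ≤ 1 + 1 := add_le_add
              (LinearMap.mkContinuous_norm_le _ zero_le_one _)
              (LinearMap.mkContinuous_norm_le _ zero_le_one _)
          _ = 2 := by norm_num
    _ = 2 * ν := by simp [mul_comm]

lemma quadForm_H0_lower (ν : ℕ) (g : L2 (Zlat ν)) :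
    quadForm (H0 ν - ((2 * (ν:ℝ) : ℝ) : ℂ) • 1) g ≥ -(4 * ν) * ‖g‖ ^ 2 := by
  rw [quadForm]
  simp only [ContinuousLinearMap.sub_apply, ContinuousLinearMap.smul_apply,
    ContinuousLinearMap.one_apply, inner_sub_right, inner_smul_right]
  rw [Complex.sub_re]
  have h1 : (((2 * (ν:ℝ) : ℝ) : ℂ) * inner ℂ g g).re = 2 * ν * ‖g‖ ^ 2 := by
    rw [Complex.re_ofReal_mul]
    congr 1
    exact_mod_cast @inner_self_eq_norm_sq ℂ _ _ _ _ g
  rw [h1]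
  have h2 : (inner ℂ g (H0 ν g) : ℂ).re ≥ -(2 * ν * ‖g‖ ^ 2) := by
    have hb : ‖(inner ℂ g (H0 ν g) : ℂ)‖ ≤ 2 * ν * ‖g‖ ^ 2 := by
      calc ‖(inner ℂ g (H0 ν g) : ℂ)‖ ≤ ‖g‖ * ‖H0 ν g‖ := norm_inner_le_norm _ _
        _ ≤ ‖g‖ * (‖H0 ν‖ * ‖g‖) := by
            exact mul_le_mul_of_nonneg_left ((H0 ν).le_opNorm g) (norm_nonneg _)
        _ ≤ ‖g‖ * ((2 * ν) * ‖g‖) := by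
            refine mul_le_mul_of_nonneg_left ?_ (norm_nonneg _)
            exact mul_le_mul_of_nonneg_right (norm_H0_le ν) (norm_nonneg _)
        _ = 2 * ν * ‖g‖ ^ 2 := by ring
    have habs : |(inner ℂ g (H0 ν g) : ℂ).re| ≤ 2 * ν * ‖g‖ ^ 2 :=
      le_trans (Complex.abs_re_le_norm _) hb
    linarith [(abs_le.1 habs).1]
  linarith

lemma Delta_eq {ν : ℕ} (V : Zlat ν → ℝ) (C : ℝ) (hC : ∀ n, |V n| ≤ C)
    (f g : L2 (Zlat ν)) :
    Delta ν V C hC (f + g) (Uop ν (f - g)) =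
      2 * quadForm (H0 ν - ((2 * (ν:ℝ) : ℝ) : ℂ) • 1) f +
        2 * quadForm (H0 ν - ((2 * (ν:ℝ) : ℝ) : ℂ) • 1) g +
        4 * (inner ℂ f (mulOp V C hC g) : ℂ).re := by
  set c : ℂ := ((2 * (ν:ℝ) : ℝ) : ℂ) with hc
  set w : L2 (Zlat ν) := f - g with hw
  have hop : (-(schrodinger ν V C hC) - c • 1) (Uop ν w) =
      Uop ν (H0 ν w - mulOp V C hC w - c • w) := by
    simp only [schrodinger, ContinuousLinearMap.sub_apply, ContinuousLinearMap.neg_apply,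
      ContinuousLinearMap.add_apply, ContinuousLinearMap.smul_apply,
      ContinuousLinearMap.one_apply, map_sub, map_smul, H0_Uop, mulOp_Uop]
    module
  have hsym : (inner ℂ g (mulOp V C hC f) : ℂ).re = (inner ℂ f (mulOp V C hC g) : ℂ).re := by
    rw [← inner_mulOp_symm V C hC f g, ← inner_conj_symm, Complex.conj_re]
  rw [Delta, quadForm, quadForm, hop, inner_Uop_Uop, hw]
  simp only [quadForm, schrodinger, ContinuousLinearMap.sub_apply,
    ContinuousLinearMap.add_apply, ContinuousLinearMap.smul_apply,
    ContinuousLinearMap.one_apply, map_add, map_sub, map_smul,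
    inner_add_left, inner_add_right, inner_sub_left, inner_sub_right, inner_smul_right,
    Complex.add_re, Complex.sub_re, hc, Complex.re_ofReal_mul]
  rw [hsym]
  ring

/-- Proposition 2.1: for all `f, g ∈ ℓ²(ℤ^ν)`,
`Δ(f+g, U(f−g); V) ≥ 2⟨f,(H₀−2ν)f⟩ − 8ν‖g‖² + 4 Re⟨f, Vg⟩`. -/
theorem statement0 (ν : ℕ) (hν : 1 ≤ ν) (V : Zlat ν → ℝ) (C : ℝ) (hC : ∀ n, |V n| ≤ C)
    (f g : L2 (Zlat ν)) :
    Delta ν V C hC (f + g) (Uop ν (f - g)) ≥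
      2 * quadForm (H0 ν - ((2 * (ν:ℝ) : ℝ) : ℂ) • 1) f - 8 * (ν:ℝ) * ‖g‖ ^ 2 +
        4 * (inner ℂ f (mulOp V C hC g) : ℂ).re := by
  rw [ge_iff_le, Delta_eq V C hC f g]
  have := quadForm_H0_lower ν g
  linarith

end DHKS
end
end

section
/- There exist constants 0 < c₁ ≤ c₂ < ∞ such that for all integers L₁, L₂ ≥ 1 there exists φ ∈ ℓ²(ℤ) supported in {n ∈ ℤ : −L₁ ≤ n ≤ L₂} with: (i) φ(0) = 1; (ii) ⟨φ, (2 − H₀)φ⟩ = (L₁ + 1)⁻¹ + (L₂ + 1)⁻¹; and (iii) c₁(L₁ + L₂) ≤ ‖φ‖² ≤ c₂(L₁ + L₂). -/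
noncomputable section

open scoped ComplexConjugate

namespace DHKS

/-! ## The free operator on ℓ²(ℤ) -/

/-- The free discrete Schrödinger operator `(H₀ u)(n) = u(n+1) + u(n-1)` on `ℓ²(ℤ)`. -/
def H0Z : L2 ℤ →L[ℂ] L2 ℤ :=
  compOp (fun n : ℤ => n + 1) (add_left_injective _) +
    compOp (fun n : ℤ => n - 1) (fun x y h => by simpa using h)

@[simp] lemma H0Z_apply (u : L2 ℤ) (n : ℤ) :
    (H0Z u : ℤ → ℂ) n = (u : ℤ → ℂ) (n + 1) + (u : ℤ → ℂ) (n - 1) := by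
  simp [H0Z, ContinuousLinearMap.add_apply, lp.coeFn_add, Pi.add_apply]
  rfl

end DHKS

namespace DHKS

/-- Proposition 4.3: there are constants `0 < c₁ ≤ c₂ < ∞` such that for
all `L₁, L₂ ≥ 1` there is `φ ∈ ℓ²(ℤ)` supported in `[-L₁, L₂]` with `φ(0) = 1`,
`⟨φ, (2−H₀)φ⟩ = (L₁+1)⁻¹ + (L₂+1)⁻¹` and `c₁(L₁+L₂) ≤ ‖φ‖² ≤ c₂(L₁+L₂)`. -/
theorem statement7 :
    ∃ c₁ c₂ : ℝ, 0 < c₁ ∧ c₁ ≤ c₂ ∧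
      ∀ L₁ L₂ : ℤ, 1 ≤ L₁ → 1 ≤ L₂ →
        ∃ φ : L2 ℤ,
          (∀ n : ℤ, (φ : ℤ → ℂ) n ≠ 0 → -L₁ ≤ n ∧ n ≤ L₂) ∧
          (φ : ℤ → ℂ) 0 = 1 ∧
          (inner ℂ φ (((((2:ℝ)):ℂ) • 1 - H0Z) φ) : ℂ) =
            ((((L₁:ℝ) + 1)⁻¹ + ((L₂:ℝ) + 1)⁻¹ : ℝ) : ℂ) ∧
          c₁ * ((L₁:ℝ) + (L₂:ℝ)) ≤ ‖φ‖ ^ 2 ∧ ‖φ‖ ^ 2 ≤ c₂ * ((L₁:ℝ) + (L₂:ℝ)) := by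
  refine ⟨1/8, 2, by norm_num, by norm_num, fun L₁ L₂ hL₁ hL₂ => ?_⟩
  set a : ℝ := (L₁ : ℝ) + 1 with ha_def
  set b : ℝ := (L₂ : ℝ) + 1 with hb_def
  have ha : (0:ℝ) < a := by positivity
  have hb : (0:ℝ) < b := by positivity
  set g : ℤ → ℝ := fun n => max 0 (min (1 - (n:ℝ)/b) (1 + (n:ℝ)/a)) with hg_def
  have hg0 : ∀ n, 0 ≤ g n := fun n => le_max_left _ _
  have hg1 : ∀ n, g n ≤ 1 := by
    intro n
    apply max_le (by norm_num)
    rcases le_or_gt 0 (n:ℝ) with h | h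
    · refine le_trans (min_le_left _ _) ?_
      have : 0 ≤ (n:ℝ)/b := div_nonneg h hb.le
      linarith
    · refine le_trans (min_le_right _ _) ?_
      have : (n:ℝ)/a ≤ 0 := div_nonpos_of_nonpos_of_nonneg h.le ha.le
      linarith
  have hcastL : ∀ m : ℤ, -L₁ - 1 ≤ m → -a ≤ (m:ℝ) := by
    intro m hm
    have : ((-L₁ - 1 : ℤ) : ℝ) ≤ (m:ℝ) := by exact_mod_cast hm
    push_cast at this
    rw [ha_def]
    linarith
  have hcastR : ∀ m : ℤ, m ≤ L₂ + 1 → (m:ℝ) ≤ b := by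
    intro m hm
    have : (m:ℝ) ≤ ((L₂ + 1 : ℤ) : ℝ) := by exact_mod_cast hm
    push_cast at this
    rw [hb_def]
    linarith
  -- support
  have hsupp : ∀ n : ℤ, g n ≠ 0 → -L₁ ≤ n ∧ n ≤ L₂ := by
    intro n hn
    have hpos : 0 < min (1 - (n:ℝ)/b) (1 + (n:ℝ)/a) := by
      by_contra h
      exact hn (max_eq_left (not_lt.1 h))
    have h1 : (n:ℝ) < b := by
      have h := (lt_min_iff.1 hpos).1
      have h' : (n:ℝ)/b < 1 := by linarith
      exact (div_lt_one hb).1 h'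
    have h2 : -a < (n:ℝ) := by
      have h := (lt_min_iff.1 hpos).2
      have h' : (-1 : ℝ) < (n:ℝ)/a := by linarith
      have := (lt_div_iff₀ ha).1 h'
      linarith
    have h1' : n < L₂ + 1 := by
      have : (n:ℝ) < ((L₂ + 1 : ℤ) : ℝ) := by push_cast; rw [hb_def] at h1; linarith
      exact_mod_cast this
    have h2' : -(L₁+1) < n := by
      have : ((-(L₁+1) : ℤ) : ℝ) < (n:ℝ) := by push_cast; rw [ha_def] at h2; linarith
      exact_mod_cast this
    omega
  have hzero : ∀ n : ℤ, n ∉ Finset.Icc (-L₁) L₂ → g n = 0 := by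
    intro n hn
    by_contra h
    exact hn (Finset.mem_Icc.2 (hsupp n h))
  -- piecewise formulas
  have hright : ∀ n : ℤ, 0 ≤ n → (n:ℝ) ≤ b → g n = 1 - (n:ℝ)/b := by
    intro n hn hnb
    have hn' : (0:ℝ) ≤ (n:ℝ) := by exact_mod_cast hn
    have hmin : min (1 - (n:ℝ)/b) (1 + (n:ℝ)/a) = 1 - (n:ℝ)/b := by
      apply min_eq_left
      have h1 : (n:ℝ)/b ≥ 0 := div_nonneg hn' hb.le
      have h2 : (n:ℝ)/a ≥ 0 := div_nonneg hn' ha.le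
      linarith
    have hgn : g n = max 0 (1 - (n:ℝ)/b) := by rw [hg_def]; simp only [hmin]
    rw [hgn]
    apply max_eq_right
    have : (n:ℝ)/b ≤ 1 := (div_le_one hb).2 hnb
    linarith
  have hleft : ∀ n : ℤ, -a ≤ (n:ℝ) → n ≤ 0 → g n = 1 + (n:ℝ)/a := by
    intro n hna hn
    have hn' : (n:ℝ) ≤ 0 := by exact_mod_cast hn
    have hmin : min (1 - (n:ℝ)/b) (1 + (n:ℝ)/a) = 1 + (n:ℝ)/a := by
      apply min_eq_right
      have h1 : (n:ℝ)/b ≤ 0 := div_nonpos_of_nonpos_of_nonneg hn' hb.le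
      have h2 : (n:ℝ)/a ≤ 0 := div_nonpos_of_nonpos_of_nonneg hn' ha.le
      linarith
    have hgn : g n = max 0 (1 + (n:ℝ)/a) := by rw [hg_def]; simp only [hmin]
    rw [hgn]
    apply max_eq_right
    have : -1 ≤ (n:ℝ)/a := by
      rw [le_div_iff₀ ha]
      linarith
    linarith
  have hg0val : g 0 = 1 := by
    have := hright 0 le_rfl (by push_cast; linarith)
    simpa using this
  -- the element φ
  have hmem : Memℓp (fun n : ℤ => ((g n : ℝ) : ℂ)) 2 := by
    apply memℓp_gen
    apply summable_of_ne_finset_zero (s := Finset.Icc (-L₁) L₂)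
    intro n hn
    rw [hzero n hn]
    norm_num
  set φ : L2 ℤ := ⟨fun n => ((g n : ℝ) : ℂ), hmem⟩ with hφ_def
  have hφcoe : ∀ n, (φ : ℤ → ℂ) n = ((g n : ℝ) : ℂ) := fun n => rfl
  -- norm squared as finite sum
  have hns : ‖φ‖ ^ 2 = ∑ n ∈ Finset.Icc (-L₁) L₂, g n ^ 2 := by
    have h1 : ‖φ‖ ^ (2:ℝ) = ∑' n : ℤ, ‖(φ : ℤ → ℂ) n‖ ^ (2:ℝ) := by
      simpa using lp.norm_rpow_eq_tsum (p := 2) (by norm_num) φ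
    have h2 : ∀ n : ℤ, ‖(φ : ℤ → ℂ) n‖ ^ (2:ℝ) = g n ^ 2 := by
      intro n
      rw [hφcoe, Complex.norm_real, Real.norm_eq_abs,
        show (2:ℝ) = ((2:ℕ):ℝ) by norm_num, Real.rpow_natCast, sq_abs]
    have h3 : ‖φ‖ ^ (2:ℝ) = ‖φ‖ ^ (2:ℕ) := by
      rw [show (2:ℝ) = ((2:ℕ):ℝ) by norm_num, Real.rpow_natCast]
    calc ‖φ‖ ^ 2 = ‖φ‖ ^ (2:ℝ) := h3.symm
      _ = ∑' n : ℤ, g n ^ 2 := by rw [h1]; exact tsum_congr h2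
      _ = ∑ n ∈ Finset.Icc (-L₁) L₂, g n ^ 2 :=
          tsum_eq_sum (fun n hn => by rw [hzero n hn]; ring)
  refine ⟨φ, ?_, ?_, ?_, ?_, ?_⟩
  · intro n hn
    apply hsupp
    intro h
    apply hn
    rw [hφcoe, h]
    norm_num
  · rw [hφcoe, hg0val]; norm_num
  · -- quadratic form
    have hA : ∀ n : ℤ, (((((2:ℝ)):ℂ) • 1 - H0Z) φ : ℤ → ℂ) n
        = ((2 * g n - g (n+1) - g (n-1) : ℝ) : ℂ) := by
      intro n
      have h1 : (((((2:ℝ)):ℂ) • 1 - H0Z) φ) = (((2:ℝ)):ℂ) • φ - H0Z φ := by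
        simp [ContinuousLinearMap.sub_apply]
      rw [h1]
      have h2 : ((((2:ℝ):ℂ) • φ - H0Z φ : L2 ℤ) : ℤ → ℂ) n
          = ((2:ℝ):ℂ) * (φ : ℤ → ℂ) n - (H0Z φ : ℤ → ℂ) n := by
        rw [lp.coeFn_sub, Pi.sub_apply, lp.coeFn_smul, Pi.smul_apply, smul_eq_mul]
      rw [h2, H0Z_apply, hφcoe, hφcoe, hφcoe]
      push_cast
      ring
    rw [lp.inner_eq_tsum]
    have hterm : ∀ n : ℤ, (inner ℂ ((φ : ℤ → ℂ) n) ((((((2:ℝ)):ℂ) • 1 - H0Z) φ : ℤ → ℂ) n) : ℂ)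
        = ((g n * (2 * g n - g (n+1) - g (n-1)) : ℝ) : ℂ) := by
      intro n
      rw [RCLike.inner_apply, hA n, hφcoe, Complex.conj_ofReal]
      push_cast
      ring
    calc (∑' n : ℤ, (inner ℂ ((φ : ℤ → ℂ) n) ((((((2:ℝ)):ℂ) • 1 - H0Z) φ : ℤ → ℂ) n) : ℂ))
        = ∑' n : ℤ, ((g n * (2 * g n - g (n+1) - g (n-1)) : ℝ) : ℂ) := tsum_congr hterm
      _ = ((g 0 * (2 * g 0 - g (0+1) - g (0-1)) : ℝ) : ℂ) := by
          apply tsum_eq_single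
          intro n hn
          rw [Complex.ofReal_eq_zero]
          rcases eq_or_ne (g n) 0 with h | h
          · rw [h]; ring
          · obtain ⟨h1, h2⟩ := hsupp n h
            rcases lt_or_gt_of_ne hn with hneg | hpos
            · have e1 : g n = 1 + (n:ℝ)/a := hleft n (hcastL n (by omega)) (by omega)
              have e2 : g (n+1) = 1 + ((n+1:ℤ):ℝ)/a := hleft (n+1) (hcastL _ (by omega)) (by omega)
              have e3 : g (n-1) = 1 + ((n-1:ℤ):ℝ)/a := hleft (n-1) (hcastL _ (by omega)) (by omega)
              rw [e1, e2, e3]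
              push_cast
              field_simp
              ring
            · have e1 : g n = 1 - (n:ℝ)/b := hright n (by omega) (hcastR n (by omega))
              have e2 : g (n+1) = 1 - ((n+1:ℤ):ℝ)/b := hright (n+1) (by omega) (hcastR _ (by omega))
              have e3 : g (n-1) = 1 - ((n-1:ℤ):ℝ)/b := hright (n-1) (by omega) (hcastR _ (by omega))
              rw [e1, e2, e3]
              push_cast
              field_simp
              ring
      _ = ((((L₁:ℝ) + 1)⁻¹ + ((L₂:ℝ) + 1)⁻¹ : ℝ) : ℂ) := by
          have e0 : ((0:ℤ)+1) = (1:ℤ) := by norm_num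
          have e0' : ((0:ℤ)-1) = (-1:ℤ) := by norm_num
          have e1 : g 1 = 1 - 1/b := by
            have := hright 1 (by omega) (hcastR 1 (by omega))
            simpa using this
          have e2 : g (-1) = 1 - 1/a := by
            have := hleft (-1) (hcastL (-1) (by omega)) (by omega)
            push_cast at this
            rw [this]
            ring
          rw [e0, e0', hg0val, e1, e2, Complex.ofReal_inj]
          rw [ha_def, hb_def]
          field_simp
          ring
  · -- lower bound
    rw [hns]
    set S : Finset ℤ := Finset.Icc (-(L₁/2)) (L₂/2) with hS_def
    have hsub : S ⊆ Finset.Icc (-L₁) L₂ := by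
      intro n hn
      rw [hS_def, Finset.mem_Icc] at hn
      rw [Finset.mem_Icc]
      omega
    have hstep : ∀ n ∈ S, (1/4 : ℝ) ≤ g n ^ 2 := by
      intro n hn
      rw [hS_def, Finset.mem_Icc] at hn
      have hhalf : (1/2:ℝ) ≤ g n := by
        rcases le_or_gt 0 n with h | h
        · have h2n : 2*n ≤ L₂ := by omega
          rw [hright n h (hcastR n (by omega))]
          have hd : (n:ℝ)/b ≤ 1/2 := by
            rw [div_le_iff₀ hb, hb_def]
            have : ((2*n:ℤ):ℝ) ≤ ((L₂:ℤ):ℝ) := by exact_mod_cast h2n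
            push_cast at this
            linarith
          linarith
        · have h2n : 2*(-n) ≤ L₁ := by omega
          rw [hleft n (hcastL n (by omega)) h.le]
          have hd : -(1/2 : ℝ) ≤ (n:ℝ)/a := by
            rw [le_div_iff₀ ha, ha_def]
            have : ((-(2*(-n)):ℤ):ℝ) ≥ ((-L₁:ℤ):ℝ) := by exact_mod_cast (by omega : -L₁ ≤ -(2*(-n)))
            push_cast at this
            linarith
          linarith
      nlinarith
    have hcard := Int.card_Icc (-(L₁/2)) (L₂/2)
    have hcZ : (L₁ + L₂ : ℤ) ≤ 2 * (S.card : ℤ) := by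
      rw [hS_def, hcard]
      omega
    have hcR : ((L₁:ℝ) + (L₂:ℝ)) ≤ 2 * (S.card : ℝ) := by
      have h' : ((L₁ + L₂ : ℤ) : ℝ) ≤ ((2 * (S.card : ℤ) : ℤ) : ℝ) := by exact_mod_cast hcZ
      push_cast at h'
      linarith
    calc (1/8 : ℝ) * ((L₁:ℝ) + (L₂:ℝ)) ≤ (S.card : ℝ) * (1/4) := by linarith
      _ = ∑ _n ∈ S, (1/4 : ℝ) := by rw [Finset.sum_const, nsmul_eq_mul]
      _ ≤ ∑ n ∈ S, g n ^ 2 := Finset.sum_le_sum hstep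
      _ ≤ ∑ n ∈ Finset.Icc (-L₁) L₂, g n ^ 2 :=
          Finset.sum_le_sum_of_subset_of_nonneg hsub (fun n _ _ => sq_nonneg _)
  · -- upper bound
    rw [hns]
    have hcard := Int.card_Icc (-L₁) L₂
    have hcZ : ((Finset.Icc (-L₁) L₂).card : ℤ) = L₁ + L₂ + 1 := by
      rw [hcard]; omega
    have hcR : (((Finset.Icc (-L₁) L₂).card : ℕ) : ℝ) = (L₁:ℝ) + (L₂:ℝ) + 1 := by
      have := congrArg (fun x : ℤ => (x : ℝ)) hcZ
      push_cast at this
      exact this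
    have hL₁R : (1:ℝ) ≤ (L₁:ℝ) := by exact_mod_cast hL₁
    have hL₂R : (1:ℝ) ≤ (L₂:ℝ) := by exact_mod_cast hL₂
    calc ∑ n ∈ Finset.Icc (-L₁) L₂, g n ^ 2
        ≤ ∑ _n ∈ Finset.Icc (-L₁) L₂, (1:ℝ) := by
          refine Finset.sum_le_sum (fun n _ => ?_)
          exact pow_le_one₀ (hg0 n) (hg1 n)
      _ = (((Finset.Icc (-L₁) L₂).card : ℕ) : ℝ) := by
          rw [Finset.sum_const, nsmul_eq_mul, mul_one]
      _ ≤ 2 * ((L₁:ℝ) + (L₂:ℝ)) := by rw [hcR]; linarith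

end DHKS
end
end
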